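/- With the graded Lie algebra g₊(F) as above, if the cubic form F : Sym³V → I is nondegenerate (i.e., the only v ∈ V with F(v, v₁, v₂) = 0 for all v₁, v₂ ∈ V is v = 0), then [g₁, g₁] = g₂. -/

import Mathlib

open TensorProduct Module

/-- If the cubic form `F` is nondegenerate then `[g₁, g₁] = g₂` in the
graded Lie algebra `g₊(F)` (Definition 3.13 of the paper). -/
theorem stmt1
    (U V I Λ : Type*)
    [AddCommGroup U] [Module ℂ U] [AddCommGroup V] [Module ℂ V]
    [AddCommGroup I] [Module ℂ I] [AddCommGroup Λ] [Module ℂ Λ]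
    [FiniteDimensional ℂ U] [FiniteDimensional ℂ V] [FiniteDimensional ℂ I]
    [FiniteDimensional ℂ Λ]
    (hU : finrank ℂ U = 2) (hI : finrank ℂ I = 1) (hΛ : finrank ℂ Λ = 1)
    (wedge : U →ₗ[ℂ] U →ₗ[ℂ] Λ) (hwalt : ∀ u : U, wedge u u = 0)
    (hwne : wedge ≠ 0)
    (F : V →ₗ[ℂ] V →ₗ[ℂ] V →ₗ[ℂ] I)
    (hFsymm12 : ∀ v₁ v₂ : V, F v₁ v₂ = F v₂ v₁)
    (hFsymm23 : ∀ v₁ v₂ v₃ : V, F v₁ v₂ v₃ = F v₁ v₃ v₂)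
    (Br : ((U ⊗[ℂ] V) × (Λ ⊗[ℂ] (V →ₗ[ℂ] I)) × (Λ ⊗[ℂ] (I ⊗[ℂ] U)))
        →ₗ[ℂ] ((U ⊗[ℂ] V) × (Λ ⊗[ℂ] (V →ₗ[ℂ] I)) × (Λ ⊗[ℂ] (I ⊗[ℂ] U)))
        →ₗ[ℂ] ((U ⊗[ℂ] V) × (Λ ⊗[ℂ] (V →ₗ[ℂ] I)) × (Λ ⊗[ℂ] (I ⊗[ℂ] U))))
    (hanti : ∀ x y, Br x y = - Br y x)
    (h11 : ∀ (u₁ : U) (v₁ : V) (u₂ : U) (v₂ : V),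
      Br (u₁ ⊗ₜ[ℂ] v₁, 0, 0) (u₂ ⊗ₜ[ℂ] v₂, 0, 0)
        = (0, (wedge u₁ u₂) ⊗ₜ[ℂ] (F v₁ v₂), 0))
    (h21 : ∀ (l : Λ) (f : V →ₗ[ℂ] I) (u₃ : U) (v₃ : V),
      Br (0, l ⊗ₜ[ℂ] f, 0) (u₃ ⊗ₜ[ℂ] v₃, 0, 0)
        = (0, 0, l ⊗ₜ[ℂ] ((f v₃) ⊗ₜ[ℂ] u₃)))
    (h22 : ∀ (b b' : Λ ⊗[ℂ] (V →ₗ[ℂ] I)),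
      Br (0, b, 0) (0, b', 0) = 0)
    (h3 : ∀ (c : Λ ⊗[ℂ] (I ⊗[ℂ] U)) x, Br (0, 0, c) x = 0)
    -- nondegeneracy of the cubic form F
    (hFnd : ∀ v : V, (∀ v₁ v₂ : V, F v v₁ v₂ = 0) → v = 0) :
    Submodule.span ℂ
        {x | ∃ a b : U ⊗[ℂ] V, x = Br (a, 0, 0) (b, 0, 0)}
      = Submodule.span ℂ
        {x : (U ⊗[ℂ] V) × (Λ ⊗[ℂ] (V →ₗ[ℂ] I)) × (Λ ⊗[ℂ] (I ⊗[ℂ] U)) |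
          ∃ w : Λ ⊗[ℂ] (V →ₗ[ℂ] I), x = (0, w, 0)} := by
  set P := (U ⊗[ℂ] V) × (Λ ⊗[ℂ] (V →ₗ[ℂ] I)) × (Λ ⊗[ℂ] (I ⊗[ℂ] U)) with hP
  have hsplit : ∀ x y : U ⊗[ℂ] V,
      ((x + y : U ⊗[ℂ] V), (0 : Λ ⊗[ℂ] (V →ₗ[ℂ] I)), (0 : Λ ⊗[ℂ] (I ⊗[ℂ] U)))
        = ((x, 0, 0) : P) + (y, 0, 0) := by
    intro x y; simp [Prod.ext_iff]
  -- Key claim: the bracket of two elements of g₁ lands in g₂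
  have key : ∀ a b : U ⊗[ℂ] V, ∃ w : Λ ⊗[ℂ] (V →ₗ[ℂ] I),
      Br (a, 0, 0) (b, 0, 0) = (0, w, 0) := by
    intro a b
    induction a using TensorProduct.induction_on with
    | zero =>
      refine ⟨0, ?_⟩
      have : ((0 : U ⊗[ℂ] V), (0 : Λ ⊗[ℂ] (V →ₗ[ℂ] I)), (0 : Λ ⊗[ℂ] (I ⊗[ℂ] U))) = (0 : P) := rfl
      rw [this]; simp
    | tmul u v =>
      induction b using TensorProduct.induction_on with
      | zero =>
        refine ⟨0, ?_⟩
        have : ((0 : U ⊗[ℂ] V), (0 : Λ ⊗[ℂ] (V →ₗ[ℂ] I)), (0 : Λ ⊗[ℂ] (I ⊗[ℂ] U))) = (0 : P) := rfl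
        rw [this]; simp
      | tmul u' v' => exact ⟨_, h11 u v u' v'⟩
      | add x y hx hy =>
        obtain ⟨w₁, hw₁⟩ := hx; obtain ⟨w₂, hw₂⟩ := hy
        refine ⟨w₁ + w₂, ?_⟩
        rw [hsplit, map_add, hw₁, hw₂]
        simp [Prod.ext_iff]
    | add x y hx hy =>
      obtain ⟨w₁, hw₁⟩ := hx; obtain ⟨w₂, hw₂⟩ := hy
      refine ⟨w₁ + w₂, ?_⟩
      rw [hsplit, map_add, LinearMap.add_apply, hw₁, hw₂]
      simp [Prod.ext_iff]
  apply le_antisymm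
  · -- [g₁,g₁] ⊆ g₂
    rw [Submodule.span_le]
    rintro x ⟨a, b, rfl⟩
    obtain ⟨w, hw⟩ := key a b
    exact Submodule.subset_span ⟨w, hw⟩
  · -- g₂ ⊆ [g₁,g₁]
    -- The span of the maps F v₁ v₂ is all of V →ₗ I
    obtain ⟨e⟩ : Nonempty (I ≃ₗ[ℂ] ℂ) :=
      ⟨LinearEquiv.ofFinrankEq I ℂ (by simp [hI])⟩
    have hS : Submodule.span ℂ {f : V →ₗ[ℂ] I | ∃ v₁ v₂ : V, f = F v₁ v₂} = ⊤ := by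
      -- transport to the dual space
      set g : (V →ₗ[ℂ] I) ≃ₗ[ℂ] Module.Dual ℂ V := LinearEquiv.congrRight e with hg
      set D : Subspace ℂ (Module.Dual ℂ V) :=
        Submodule.span ℂ (g '' {f : V →ₗ[ℂ] I | ∃ v₁ v₂ : V, f = F v₁ v₂}) with hD
      have hDco : D.dualCoannihilator = ⊥ := by
        rw [eq_bot_iff]
        intro v hv
        rw [Submodule.mem_dualCoannihilator] at hv
        have hv' : ∀ v₁ v₂ : V, F v v₁ v₂ = 0 := by
          intro v₁ v₂
          have h1 : g (F v₁ v₂) ∈ D := Submodule.subset_span ⟨F v₁ v₂, ⟨v₁, v₂, rfl⟩, rfl⟩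
          have h2 := hv _ h1
          have h3 : e (F v₁ v₂ v) = 0 := h2
          have h4 : F v₁ v₂ v = 0 := by
            have := e.injective (by simpa using h3)
            simpa using this
          calc F v v₁ v₂ = F v₁ v v₂ := by rw [hFsymm12]
            _ = F v₁ v₂ v := by rw [hFsymm23]
            _ = 0 := h4
        simpa using hFnd v hv'
      have hDtop : D = ⊤ := by
        apply Submodule.eq_top_of_finrank_eq
        have := Subspace.finrank_add_finrank_dualCoannihilator_eq D
        rw [hDco, finrank_bot, add_zero] at this
        rw [this, Subspace.dual_finrank_eq]
      -- pull back
      rw [eq_top_iff]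
      intro f _
      have h1 : g f ∈ D := by rw [hDtop]; trivial
      rw [hD] at h1
      have h1' : g f ∈ Submodule.map (g : (V →ₗ[ℂ] I) →ₗ[ℂ] Module.Dual ℂ V)
          (Submodule.span ℂ {f : V →ₗ[ℂ] I | ∃ v₁ v₂ : V, f = F v₁ v₂}) := by
        rw [Submodule.map_span]; exact h1
      obtain ⟨f', hf', hff⟩ := Submodule.mem_map.mp h1'
      have : f' = f := g.injective hff
      rwa [← this]
    -- choose u₁ u₂ with wedge u₁ u₂ ≠ 0
    obtain ⟨u₁, u₂, hl₀⟩ : ∃ u₁ u₂ : U, wedge u₁ u₂ ≠ 0 := by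
      by_contra h
      push_neg at h
      exact hwne (by ext u₁ u₂; simpa using h u₁ u₂)
    set l₀ := wedge u₁ u₂ with hl₀def
    -- l₀ spans Λ
    have hspanΛ : Submodule.span ℂ {l₀} = ⊤ := by
      apply Submodule.eq_top_of_finrank_eq
      rw [hΛ, finrank_span_singleton hl₀]
    set LHS := Submodule.span ℂ
      {x : P | ∃ a b : U ⊗[ℂ] V, x = Br (a, 0, 0) (b, 0, 0)} with hLHS
    -- for every f in span {F v₁ v₂} = ⊤, (0, l₀ ⊗ f, 0) ∈ LHS
    have hstep : ∀ f : V →ₗ[ℂ] I, ((0, l₀ ⊗ₜ[ℂ] f, 0) : P) ∈ LHS := by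
      intro f
      have hf : f ∈ Submodule.span ℂ {f : V →ₗ[ℂ] I | ∃ v₁ v₂ : V, f = F v₁ v₂} := by
        rw [hS]; trivial
      induction hf using Submodule.span_induction with
      | mem x hx =>
        obtain ⟨v₁, v₂, rfl⟩ := hx
        exact Submodule.subset_span ⟨u₁ ⊗ₜ[ℂ] v₁, u₂ ⊗ₜ[ℂ] v₂, (h11 u₁ v₁ u₂ v₂).symm⟩
      | zero => simp [tmul_zero]; exact zero_mem _
      | add x y hx hy ihx ihy =>
        have : ((0, l₀ ⊗ₜ[ℂ] (x + y), 0) : P) = (0, l₀ ⊗ₜ[ℂ] x, 0) + (0, l₀ ⊗ₜ[ℂ] y, 0) := by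
          simp [tmul_add, Prod.ext_iff]
        rw [this]; exact add_mem ihx ihy
      | smul c x hx ihx =>
        have : ((0, l₀ ⊗ₜ[ℂ] (c • x), 0) : P) = c • (0, l₀ ⊗ₜ[ℂ] x, 0) := by
          simp [tmul_smul, Prod.ext_iff]
        rw [this]; exact Submodule.smul_mem _ c ihx
    -- hence (0, w, 0) ∈ LHS for all w
    have hall : ∀ w : Λ ⊗[ℂ] (V →ₗ[ℂ] I), ((0, w, 0) : P) ∈ LHS := by
      intro w
      induction w using TensorProduct.induction_on with
      | zero => exact zero_mem _
      | tmul l f =>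
        have hl : l ∈ Submodule.span ℂ {l₀} := by rw [hspanΛ]; trivial
        obtain ⟨c, rfl⟩ := Submodule.mem_span_singleton.mp hl
        have : ((0, (c • l₀) ⊗ₜ[ℂ] f, 0) : P) = (0, l₀ ⊗ₜ[ℂ] (c • f), 0) := by
          rw [smul_tmul]
        rw [this]; exact hstep _
      | add x y hx hy =>
        have : ((0, x + y, 0) : P) = ((0, x, 0) : P) + (0, y, 0) := by
          simp [Prod.ext_iff]
        rw [this]; exact add_mem hx hy
    rw [Submodule.span_le]
    rintro x ⟨w, rfl⟩
    exact hall w
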